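/- Let G(z) = exp(−∫_𝕋 (e^{it}+z)/(e^{it}−z) dμ(t)) be the singular inner function associated to a nonzero finite positive Borel measure μ on 𝕋 singular with respect to Lebesgue measure. Then F = 1/G is holomorphic on 𝔻 and F does not belong to H²(𝔻); in fact sup_{0<r<1} ∫_𝕋 |F(re^{it})|² dt = ∞. -/

import Mathlib

open MeasureTheory
open scoped Real

noncomputable section

instance : Fact (0 < 2 * π) := ⟨by positivity⟩

/- ### Auxiliary lemmas -/

lemma re_frac {w z : ℂ} (hw : ‖w‖ = 1) : ((w + z) / (w - z)).re = (1 - ‖z‖^2) / ‖w - z‖^2 := by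
  have h1 : Complex.normSq w = 1 := by
    rw [Complex.normSq_eq_norm_sq, hw]; norm_num
  have h2 : ‖w - z‖^2 = Complex.normSq (w - z) := by
    rw [← Complex.sq_norm]
  have h3 : ‖z‖^2 = Complex.normSq z := by rw [← Complex.sq_norm]
  rw [Complex.div_re, ← add_div, h2, h3]
  congr 1
  simp only [Complex.add_re, Complex.sub_re, Complex.add_im, Complex.sub_im,
    Complex.normSq_apply] at *
  linear_combination h1

lemma norm_fourier_one (x : AddCircle (2*π)) : ‖fourier 1 x‖ = 1 := Circle.norm_coe _

lemma fourier_one_coe (t : ℝ) :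
    fourier 1 (t : AddCircle (2*π)) = Complex.exp (t * Complex.I) := by
  rw [fourier_coe_apply]
  congr 1
  have hπ : (π : ℂ) ≠ 0 := Complex.ofReal_ne_zero.mpr Real.pi_ne_zero
  push_cast
  field_simp

lemma fourier_ne {z : ℂ} (hz : ‖z‖ < 1) (t : AddCircle (2*π)) : fourier 1 t - z ≠ 0 := by
  intro h
  rw [sub_eq_zero] at h
  rw [← h, norm_fourier_one] at hz
  exact lt_irrefl _ hz

lemma re_g_nonneg {z : ℂ} (hz : ‖z‖ < 1) (t : AddCircle (2*π)) :
    0 ≤ ((fourier 1 t + z) / (fourier 1 t - z)).re := by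
  rw [re_frac (norm_fourier_one t)]
  apply div_nonneg
  · nlinarith [norm_nonneg z]
  · positivity

lemma continuous_g {z : ℂ} (hz : ‖z‖ < 1) :
    Continuous (fun t : AddCircle (2*π) => (fourier 1 t + z) / (fourier 1 t - z)) :=
  ((fourier 1).continuous.add continuous_const).div
    ((fourier 1).continuous.sub continuous_const) (fourier_ne hz)

lemma norm_g_le {z : ℂ} (hz : ‖z‖ < 1) (t : AddCircle (2*π)) :
    ‖(fourier 1 t + z) / (fourier 1 t - z)‖ ≤ 2 / (1 - ‖z‖) := by
  rw [norm_div]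
  have h1 : ‖fourier 1 t + z‖ ≤ 2 := by
    calc ‖fourier 1 t + z‖ ≤ ‖fourier 1 t‖ + ‖z‖ := norm_add_le _ _
    _ ≤ 1 + 1 := by rw [norm_fourier_one]; linarith
    _ = 2 := by norm_num
  have h2 : 1 - ‖z‖ ≤ ‖fourier 1 t - z‖ := by
    calc 1 - ‖z‖ = ‖fourier 1 t‖ - ‖z‖ := by rw [norm_fourier_one]
    _ ≤ ‖fourier 1 t - z‖ := norm_sub_norm_le _ _
  exact div_le_div₀ (by norm_num) h1 (by linarith) h2

lemma integrable_g (μ : Measure (AddCircle (2*π))) [IsFiniteMeasure μ] {z : ℂ} (hz : ‖z‖ < 1) :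
    Integrable (fun t => (fourier 1 t + z) / (fourier 1 t - z)) μ :=
  Integrable.mono' (integrable_const (2 / (1 - ‖z‖)))
    (continuous_g hz).aestronglyMeasurable (Filter.Eventually.of_forall (norm_g_le hz))

lemma hasDerivAt_G (μ : Measure (AddCircle (2*π))) [IsFiniteMeasure μ] {z₀ : ℂ}
    (hz₀ : ‖z₀‖ < 1) :
    HasDerivAt (fun z => ∫ t, (fourier 1 t + z) / (fourier 1 t - z) ∂μ)
      (∫ t, 2 * fourier 1 t / (fourier 1 t - z₀)^2 ∂μ) z₀ := by
  set ε := (1 - ‖z₀‖) / 2 with hε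
  have hε0 : 0 < ε := by rw [hε]; linarith
  set ρ := ‖z₀‖ + ε with hρ
  have hρ1 : ρ < 1 := by rw [hρ, hε]; linarith
  have hρ0 : 0 ≤ ρ := by positivity
  have hball : ∀ z ∈ Metric.ball z₀ ε, ‖z‖ < 1 := by
    intro z hz
    rw [Metric.mem_ball, dist_eq_norm] at hz
    calc ‖z‖ = ‖z₀ + (z - z₀)‖ := by ring_nf
    _ ≤ ‖z₀‖ + ‖z - z₀‖ := norm_add_le _ _
    _ < ‖z₀‖ + ε := by linarith
    _ < 1 := by rw [← hρ]; exact hρ1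
  have key := hasDerivAt_integral_of_dominated_loc_of_deriv_le (μ := μ)
    (F := fun z t => (fourier 1 t + z) / (fourier 1 t - z))
    (F' := fun z t => 2 * fourier 1 t / (fourier 1 t - z)^2)
    (bound := fun _ => 2 / (1 - ρ)^2) (Metric.ball_mem_nhds z₀ hε0)
    ?_ (integrable_g μ hz₀) ?_ ?_ (integrable_const _) ?_
  · exact key.2
  · filter_upwards [Metric.ball_mem_nhds z₀ hε0] with z hz
    exact (continuous_g (hball z hz)).aestronglyMeasurable
  · refine Continuous.aestronglyMeasurable ?_
    exact (continuous_const.mul (fourier 1).continuous).div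
      (((fourier 1).continuous.sub continuous_const).pow 2)
      (fun t => pow_ne_zero 2 (fourier_ne hz₀ t))
  · refine Filter.Eventually.of_forall fun t => fun z hz => ?_
    have hzn : ‖z‖ ≤ ρ := by
      rw [Metric.mem_ball, dist_eq_norm] at hz
      calc ‖z‖ = ‖z₀ + (z - z₀)‖ := by ring_nf
      _ ≤ ‖z₀‖ + ‖z - z₀‖ := norm_add_le _ _
      _ ≤ ρ := by rw [hρ]; linarith
    have hden : 1 - ρ ≤ ‖fourier 1 t - z‖ := by
      calc 1 - ρ ≤ ‖fourier 1 t‖ - ‖z‖ := by rw [norm_fourier_one]; linarith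
      _ ≤ ‖fourier 1 t - z‖ := norm_sub_norm_le _ _
    rw [norm_div, norm_mul, norm_pow, norm_fourier_one]
    have h2 : (1 - ρ)^2 ≤ ‖fourier 1 t - z‖^2 := by
      apply pow_le_pow_left₀ (by linarith) hden
    refine div_le_div₀ (by norm_num) (by norm_num) (by nlinarith) h2
  · refine Filter.Eventually.of_forall fun t => fun z hz => ?_
    have hne : fourier 1 t - z ≠ 0 := fourier_ne (hball z hz) t
    have h1 : HasDerivAt (fun z : ℂ => fourier 1 t + z) 1 z := (hasDerivAt_id z).const_add _
    have h2 : HasDerivAt (fun z : ℂ => fourier 1 t - z) (-1) z := by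
      simpa using (hasDerivAt_id z).const_sub (fourier 1 t)
    have := h1.div h2 hne
    convert this using 1
    · rfl
    · rfl
    · ring


lemma coe_inj_Ioc {t y : ℝ} (ht : t ∈ Set.Ioc 0 (0 + 2*π)) (hy : y ∈ Set.Ioc 0 (0 + 2*π))
    (h : (t : AddCircle (2*π)) = (y : AddCircle (2*π))) : t = y := by
  have h1 : (AddCircle.equivIoc (2*π) 0) ↑t = ⟨t, ht⟩ := by
    rw [Equiv.apply_eq_iff_eq_symm_apply]; rfl
  have h2 : (AddCircle.equivIoc (2*π) 0) ↑y = ⟨y, hy⟩ := by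
    rw [Equiv.apply_eq_iff_eq_symm_apply]; rfl
  rw [h, h2] at h1
  exact (Subtype.mk.inj h1).symm

lemma cell_mem_iff {a b : ℝ} (ha : 0 ≤ a) (hb : b ≤ 2*π) (x : AddCircle (2*π)) :
    x ∈ ((↑) '' Set.Ioc a b : Set (AddCircle (2*π))) ↔
      ((AddCircle.equivIoc (2*π) 0) x : ℝ) ∈ Set.Ioc a b := by
  constructor
  · rintro ⟨t, ht, rfl⟩
    have hmem : t ∈ Set.Ioc (0:ℝ) (0 + 2*π) := ⟨by linarith [ht.1], by linarith [ht.2]⟩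
    have : (AddCircle.equivIoc (2*π) 0) ↑t = ⟨t, hmem⟩ := by
      rw [Equiv.apply_eq_iff_eq_symm_apply]; rfl
    rw [this]; exact ht
  · intro h
    exact ⟨((AddCircle.equivIoc (2*π) 0) x : ℝ), h,
      (AddCircle.equivIoc (2*π) 0).symm_apply_apply x⟩

lemma cell_measurable {a b : ℝ} (ha : 0 ≤ a) (hb : b ≤ 2*π) :
    MeasurableSet ((↑) '' Set.Ioc a b : Set (AddCircle (2*π))) := by
  have : ((↑) '' Set.Ioc a b : Set (AddCircle (2*π))) =
      (AddCircle.measurableEquivIoc (2*π) 0) ⁻¹' {u | (u : ℝ) ∈ Set.Ioc a b} := by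
    ext x
    rw [cell_mem_iff ha hb]
    rfl
  rw [this]
  exact (AddCircle.measurableEquivIoc (2*π) 0).measurable
    (measurable_subtype_coe measurableSet_Ioc)

lemma cell_volume {a b : ℝ} (ha : 0 ≤ a) (hb : b ≤ 2*π) :
    volume ((↑) '' Set.Ioc a b : Set (AddCircle (2*π))) = ENNReal.ofReal (b - a) := by
  rw [AddCircle.add_projection_respects_measure (2*π) 0 (cell_measurable ha hb)]
  have hset : (QuotientAddGroup.mk ⁻¹' ((↑) '' Set.Ioc a b : Set (AddCircle (2*π))))
      ∩ Set.Ioc 0 (0 + 2*π) = Set.Ioc a b := by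
    ext y
    simp only [Set.mem_inter_iff, Set.mem_preimage]
    constructor
    · rintro ⟨⟨t, ht, hty⟩, hy⟩
      have htmem : t ∈ Set.Ioc (0:ℝ) (0 + 2*π) := ⟨by linarith [ht.1], by linarith [ht.2]⟩
      rwa [← coe_inj_Ioc htmem hy hty]
    · intro hy
      exact ⟨⟨y, hy, rfl⟩, ⟨by linarith [hy.1], by linarith [hy.2]⟩⟩
  rw [hset, Real.volume_Ioc]

lemma cell_bound {δ r : ℝ} (hδ0 : 0 < δ) (hδ1 : δ ≤ 1/2) (hr : r = 1 - δ) {aj θ t' : ℝ}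
    (hθ : θ ∈ Set.Icc aj (aj + δ)) (ht' : t' ∈ Set.Ioc aj (aj + δ)) :
    1 / (9*δ) ≤ ((fourier 1 (t' : AddCircle (2*π)) + ((r:ℂ) * Complex.exp (θ * Complex.I)))
      / (fourier 1 (t' : AddCircle (2*π)) - ((r:ℂ) * Complex.exp (θ * Complex.I)))).re := by
  set z : ℂ := (r : ℂ) * Complex.exp (θ * Complex.I) with hzdef
  have hznorm : ‖z‖ = r := by
    rw [hzdef, norm_mul, Complex.norm_exp_ofReal_mul_I,
      mul_one, Complex.norm_real, Real.norm_eq_abs, abs_of_pos (by rw [hr]; linarith)]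
  have hw : ‖fourier 1 ((t' : ℝ) : AddCircle (2*π))‖ = 1 := norm_fourier_one _
  rw [re_frac hw]
  have hnum : δ ≤ 1 - ‖z‖^2 := by rw [hznorm, hr]; nlinarith
  have hdiff : ‖fourier 1 ((t' : ℝ) : AddCircle (2*π)) - z‖ ≤ 3 * δ := by
    rw [fourier_one_coe]
    have hsplit : Complex.exp (t' * Complex.I) - z
        = (Complex.exp (t' * Complex.I) - Complex.exp (θ * Complex.I))
          + (1 - (r:ℂ)) * Complex.exp (θ * Complex.I) := by
      rw [hzdef]; ring
    rw [hsplit]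
    have h1 : ‖Complex.exp (t' * Complex.I) - Complex.exp (θ * Complex.I)‖ ≤ 2 * δ := by
      have hx : ((t':ℂ)) * Complex.I = (θ:ℂ) * Complex.I + ((t' - θ : ℝ) : ℂ) * Complex.I := by
        push_cast; ring
      rw [hx, Complex.exp_add]
      have hfact : Complex.exp ((θ:ℂ) * Complex.I) * Complex.exp (((t' - θ : ℝ) : ℂ) * Complex.I)
          - Complex.exp ((θ:ℂ) * Complex.I)
          = Complex.exp ((θ:ℂ) * Complex.I) * (Complex.exp (((t' - θ : ℝ):ℂ) * Complex.I) - 1) := by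
        ring
      rw [hfact, norm_mul,
        Complex.norm_exp_ofReal_mul_I, one_mul]
      have habs : ‖(((t' - θ : ℝ) : ℂ) * Complex.I)‖ = |t' - θ| := by
        rw [norm_mul, Complex.norm_I, mul_one, Complex.norm_real, Real.norm_eq_abs]
      have hd : |t' - θ| ≤ δ := by
        rw [abs_le]
        constructor
        · linarith [ht'.1, hθ.2]
        · linarith [ht'.2, hθ.1]
      have hle1 : ‖(((t' - θ : ℝ) : ℂ) * Complex.I)‖ ≤ 1 := by
        rw [habs]; linarith
      calc ‖Complex.exp (((t' - θ : ℝ) : ℂ) * Complex.I) - 1‖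
          ≤ 2 * ‖(((t' - θ : ℝ) : ℂ) * Complex.I)‖ := Complex.norm_exp_sub_one_le hle1
        _ ≤ 2 * δ := by rw [habs]; linarith
    have h2 : ‖(1 - (r:ℂ)) * Complex.exp ((θ:ℂ) * Complex.I)‖ = δ := by
      rw [norm_mul, Complex.norm_exp_ofReal_mul_I, mul_one]
      have : (1 : ℂ) - (r : ℂ) = ((δ : ℝ) : ℂ) := by rw [hr]; push_cast; ring
      rw [this, Complex.norm_real, Real.norm_eq_abs, abs_of_pos hδ0]
    calc ‖_ + _‖ ≤ _ + _ := norm_add_le _ _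
      _ ≤ 2*δ + δ := by rw [h2]; linarith
      _ = 3 * δ := by ring
  have hdistpos : (0:ℝ) < ‖fourier 1 ((t' : ℝ) : AddCircle (2*π)) - z‖ := by
    have hne : fourier 1 ((t' : ℝ) : AddCircle (2*π)) - z ≠ 0 := by
      intro h
      rw [sub_eq_zero] at h
      have h2 := hw
      rw [h, hznorm] at h2
      rw [hr] at h2; linarith
    exact norm_pos_iff.mpr hne
  have hden : ‖fourier 1 ((t' : ℝ) : AddCircle (2*π)) - z‖^2 ≤ 9 * δ^2 := by
    nlinarith
  have h9 : (1:ℝ) / (9*δ) = δ / (9 * δ^2) := by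
    field_simp
  rw [h9]
  exact div_le_div₀ (by nlinarith) hnum (by positivity) hden

set_option maxHeartbeats 1000000 in
/-- Let `G(z) = exp(−∫ (e^{it}+z)/(e^{it}−z) dμ(t))` be the singular inner function
of a nonzero finite positive measure `μ` on `𝕋` singular w.r.t. Lebesgue (Haar) measure.
Then `F = 1/G`, i.e. `F(z) = exp(∫ (e^{it}+z)/(e^{it}−z) dμ(t))`, is holomorphic on `𝔻` and
`F ∉ H²(𝔻)`: in fact `sup_{0<r<1} ∫ |F(re^{it})|² dt = ∞`. -/
theorem reciprocal_singular_inner_not_H2 (μ : Measure (AddCircle (2 * π)))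
    [IsFiniteMeasure μ] (hμ0 : μ ≠ 0)
    (hsing : μ.MutuallySingular AddCircle.haarAddCircle)
    (F : ℂ → ℂ)
    (hF : ∀ z ∈ Metric.ball (0 : ℂ) 1,
      F z = Complex.exp (∫ t, (fourier 1 t + z) / (fourier 1 t - z) ∂μ)) :
    DifferentiableOn ℂ F (Metric.ball (0 : ℂ) 1) ∧
    ¬ ∃ M : ℝ, ∀ r : ℝ, 0 < r → r < 1 →
      (∫ t in (0:ℝ)..(2 * π), ‖F (r * Complex.exp (t * Complex.I))‖ ^ 2) ≤ M := by
  classical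
  have hdiff : DifferentiableOn ℂ F (Metric.ball (0:ℂ) 1) := by
    refine DifferentiableOn.congr
      (f := fun z => Complex.exp (∫ t, (fourier 1 t + z) / (fourier 1 t - z) ∂μ)) ?_ hF
    intro z hz
    have hz' : ‖z‖ < 1 := by rwa [Metric.mem_ball, dist_zero_right] at hz
    exact ((hasDerivAt_G μ hz').differentiableAt.cexp).differentiableWithinAt
  refine ⟨hdiff, ?_⟩
  rintro ⟨M, hM⟩
  -- basic constants
  have hμuniv : μ Set.univ ≠ 0 := fun h => hμ0 (Measure.measure_univ_eq_zero.mp h)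
  set c : ℝ := (μ Set.univ).toReal with hcdef
  have hc0 : 0 < c := ENNReal.toReal_pos hμuniv (measure_ne_top _ _)
  set Mp : ℝ := max M 0 + 1 with hMpdef
  have hMp0 : 0 < Mp := by positivity
  set ε₀ : ℝ := c^2 / (648 * Mp) with hε₀def
  have hε₀ : 0 < ε₀ := by positivity
  -- singularity: closed null-carrier K
  obtain ⟨s, hsm, hμs, hνs⟩ := hsing
  have hvols : volume sᶜ = 0 := by
    rw [AddCircle.volume_eq_smul_haarAddCircle]
    simp [hνs]
  have hμsc : μ sᶜ = μ Set.univ := by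
    apply le_antisymm (measure_mono (Set.subset_univ _))
    calc μ Set.univ = μ (s ∪ sᶜ) := by rw [Set.union_compl_self]
    _ ≤ μ s + μ sᶜ := measure_union_le _ _
    _ = μ sᶜ := by rw [hμs, zero_add]
  obtain ⟨K, hKs, hKclosed, hKμ⟩ := hsm.compl.exists_isClosed_lt_add (μ := μ)
    (measure_ne_top μ _) (ε := ENNReal.ofReal (c/2))
    (by simp only [ne_eq, ENNReal.ofReal_eq_zero, not_le]; linarith)
  have hKvol : volume K = 0 := measure_mono_null hKs hvols
  have hKμ' : c/2 ≤ (μ K).toReal := by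
    have h1 : μ Set.univ ≤ μ K + ENNReal.ofReal (c/2) := le_of_lt (hμsc ▸ hKμ)
    have h2 : (μ Set.univ).toReal ≤ (μ K + ENNReal.ofReal (c/2)).toReal :=
      ENNReal.toReal_mono (by finiteness) h1
    rw [ENNReal.toReal_add (measure_ne_top μ _) ENNReal.ofReal_ne_top,
      ENNReal.toReal_ofReal (by linarith)] at h2
    rw [← hcdef] at h2
    linarith
  -- thickening of K has small volume
  have hthick : Filter.Tendsto (fun η => volume (Metric.thickening η K))
      (nhdsWithin 0 (Set.Ioi 0)) (nhds 0) := by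
    have h := tendsto_measure_thickening_of_isClosed
      (μ := (volume : Measure (AddCircle (2*π)))) ⟨1, one_pos, measure_ne_top _ _⟩ hKclosed
    rwa [hKvol] at h
  have hev : ∀ᶠ η in nhdsWithin 0 (Set.Ioi 0),
      volume (Metric.thickening η K) < ENNReal.ofReal ε₀ :=
    hthick.eventually_lt_const (ENNReal.ofReal_pos.mpr hε₀)
  rw [eventually_nhdsWithin_iff] at hev
  obtain ⟨δ₀, hδ₀pos, hδ₀⟩ := Metric.eventually_nhds_iff.mp hev
  -- choose grid size
  obtain ⟨n, hn⟩ := exists_nat_gt (max 4 (8*π / min δ₀ 1))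
  have hn4 : (4:ℝ) < n := lt_of_le_of_lt (le_max_left _ _) hn
  have hn0 : (0:ℝ) < n := by linarith
  set δ : ℝ := 2*π / n with hδdef
  have hδ0 : 0 < δ := by rw [hδdef]; positivity
  have h2π : (n:ℝ) * δ = 2*π := by
    rw [hδdef]; field_simp
  have hmin : 0 < min δ₀ 1 := lt_min hδ₀pos one_pos
  have hδsmall : 2*δ < min δ₀ 1 := by
    have h8 : 8*π / min δ₀ 1 < n := lt_of_le_of_lt (le_max_right _ _) hn
    rw [div_lt_iff₀ hmin] at h8
    have h4π : 4*π < (n:ℝ) * min δ₀ 1 := by nlinarith [Real.pi_pos]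
    have he : 2*δ = 4*π/(n:ℝ) := by rw [hδdef]; ring
    rw [he, div_lt_iff₀ hn0]
    linarith
  have hδhalf : δ ≤ 1/2 := by
    have := min_le_right δ₀ 1
    linarith
  have hδδ₀ : 2*δ < δ₀ := lt_of_lt_of_le hδsmall (min_le_left _ _)
  have hthickvol : volume (Metric.thickening (2*δ) K) < ENNReal.ofReal ε₀ := by
    apply hδ₀
    · rw [Real.dist_eq, sub_zero, abs_of_pos (by linarith)]; exact hδδ₀
    · exact Set.mem_Ioi.mpr (by linarith)
  set r : ℝ := 1 - δ with hrdef
  have hr0 : 0 < r := by rw [hrdef]; linarith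
  have hr1 : r < 1 := by rw [hrdef]; linarith
  have hint := hM r hr0 hr1
  -- grid cells
  set a : ℕ → ℝ := fun j => j * δ with hadef
  set C : ℕ → Set (AddCircle (2*π)) := fun j => ((↑) '' Set.Ioc (a j) (a (j+1)) : Set _)
    with hCdef
  have haj : ∀ j : ℕ, a (j+1) = a j + δ := by
    intro j; rw [hadef]; push_cast; ring
  have hbounds : ∀ j, j < n → 0 ≤ a j ∧ a (j+1) ≤ 2*π := by
    intro j hj
    constructor
    · rw [hadef]; positivity
    · rw [hadef, ← h2π]
      have hj1 : ((j:ℝ)+1) ≤ (n:ℝ) := by exact_mod_cast Nat.succ_le_of_lt hj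
      push_cast
      nlinarith
  have hCmeas : ∀ j, j < n → MeasurableSet (C j) :=
    fun j hj => cell_measurable (hbounds j hj).1 (hbounds j hj).2
  have hCvol : ∀ j, j < n → volume (C j) = ENNReal.ofReal δ := by
    intro j hj
    rw [hCdef]
    simp only
    rw [cell_volume (hbounds j hj).1 (hbounds j hj).2, haj j]
    congr 1
    ring
  -- covering
  have hcover : ∀ x : AddCircle (2*π), ∃ j, j < n ∧ x ∈ C j := by
    intro x
    set y := ((AddCircle.equivIoc (2*π) 0) x : ℝ) with hy
    have hymem : y ∈ Set.Ioc (0:ℝ) (0 + 2*π) := ((AddCircle.equivIoc (2*π) 0) x).2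
    have hy0 : 0 < y := hymem.1
    have hy2π : y ≤ 2*π := by linarith [hymem.2]
    set k := ⌈y/δ⌉₊ with hk
    have hk1 : 1 ≤ k := Nat.one_le_iff_ne_zero.mpr (by
      intro h
      have := Nat.ceil_pos.mpr (show 0 < y/δ by positivity)
      omega)
    have hkn : k ≤ n := by
      apply Nat.ceil_le.mpr
      rw [div_le_iff₀ hδ0]
      calc y ≤ 2*π := hy2π
      _ = (n:ℝ) * δ := h2π.symm
    refine ⟨k-1, by omega, ?_⟩
    have hnat : ((k-1:ℕ):ℝ) = (k:ℝ) - 1 := by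
      push_cast [Nat.cast_sub hk1]
      ring
    have hsucc : (k-1)+1 = k := by omega
    rw [hCdef]
    simp only
    rw [cell_mem_iff (hbounds (k-1) (by omega)).1 (hbounds (k-1) (by omega)).2, hsucc]
    constructor
    · rw [hadef]
      simp only
      rw [hnat]
      have hceil : (k:ℝ) < y/δ + 1 := by
        rw [hk]
        exact Nat.ceil_lt_add_one (by positivity)
      have : (k:ℝ) - 1 < y/δ := by linarith
      calc ((k:ℝ)-1) * δ < (y/δ) * δ := by nlinarith
      _ = y := by field_simp
    · rw [hadef]
      simp only
      have hle : y/δ ≤ (k:ℝ) := Nat.le_ceil _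
      calc y = (y/δ) * δ := by field_simp
      _ ≤ (k:ℝ) * δ := by nlinarith
  -- good cells
  set J : Finset ℕ := (Finset.range n).filter (fun j => (C j ∩ K).Nonempty) with hJdef
  have hJn : ∀ j ∈ J, j < n := fun j hj => Finset.mem_range.mp (Finset.mem_filter.mp hj).1
  set m : ℕ → ℝ := fun j => (μ (C j)).toReal with hmdef
  have hm0 : ∀ j, 0 ≤ m j := fun j => ENNReal.toReal_nonneg
  -- disjointness
  have hdisjJ : (↑J : Set ℕ).PairwiseDisjoint C := by
    intro i hi j hj hij
    simp only [Function.onFun]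
    rw [Set.disjoint_left]
    intro x hxi hxj
    have hiJ := hJn i hi
    have hjJ := hJn j hj
    rw [hCdef] at hxi hxj
    simp only at hxi hxj
    rw [cell_mem_iff (hbounds i hiJ).1 (hbounds i hiJ).2] at hxi
    rw [cell_mem_iff (hbounds j hjJ).1 (hbounds j hjJ).2] at hxj
    rw [hadef] at hxi hxj
    simp only at hxi hxj
    rcases lt_or_gt_of_ne hij with h | h
    · have : ((i:ℝ)+1) ≤ j := by exact_mod_cast Nat.succ_le_of_lt h
      have h1 := hxi.2
      have h2 := hxj.1
      push_cast at h1 h2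
      nlinarith
    · have : ((j:ℝ)+1) ≤ i := by exact_mod_cast Nat.succ_le_of_lt h
      have h1 := hxj.2
      have h2 := hxi.1
      push_cast at h1 h2
      nlinarith
  -- mass in good cells
  have hKcover : K ⊆ ⋃ j ∈ J, C j := by
    intro x hx
    obtain ⟨j, hj, hxj⟩ := hcover x
    exact Set.mem_biUnion (Finset.mem_filter.mpr
      ⟨Finset.mem_range.mpr hj, ⟨x, hxj, hx⟩⟩) hxj
  have hsumJ : c/2 ≤ ∑ j ∈ J, m j := by
    have h1 : μ K ≤ ∑ j ∈ J, μ (C j) :=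
      le_trans (measure_mono hKcover) (measure_biUnion_finset_le J C)
    have h2 : (μ K).toReal ≤ (∑ j ∈ J, μ (C j)).toReal :=
      ENNReal.toReal_mono (ENNReal.sum_ne_top.mpr (fun j _ => measure_ne_top μ _)) h1
    rw [ENNReal.toReal_sum (fun j _ => measure_ne_top μ _)] at h2
    rw [hmdef]
    simp only
    linarith
  -- card bound
  have hJcard : (J.card : ℝ) * δ < ε₀ := by
    have h1 : (⋃ j ∈ J, C j) ⊆ Metric.thickening (2*δ) K := by
      intro x hx
      rw [Set.mem_iUnion₂] at hx
      obtain ⟨j, hj, hxj⟩ := hx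
      obtain ⟨kpt, hkC, hkK⟩ := (Finset.mem_filter.mp hj).2
      rw [Metric.mem_thickening_iff]
      refine ⟨kpt, hkK, ?_⟩
      rw [hCdef] at hxj hkC
      simp only at hxj hkC
      obtain ⟨tx, htx, rfl⟩ := hxj
      obtain ⟨tk, htk, rfl⟩ := hkC
      have hdist : dist ((tx : ℝ) : AddCircle (2*π)) ((tk : ℝ) : AddCircle (2*π)) ≤ |tx - tk| := by
        rw [dist_eq_norm]
        have hco : ((tx : ℝ) : AddCircle (2*π)) - ((tk : ℝ) : AddCircle (2*π))
            = ((tx - tk : ℝ) : AddCircle (2*π)) := by norm_cast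
        rw [hco]
        calc ‖((tx - tk : ℝ) : AddCircle (2*π))‖ ≤ ‖tx - tk‖ := QuotientAddGroup.norm_mk_le_norm
        _ = |tx - tk| := Real.norm_eq_abs _
      have hbnd : |tx - tk| ≤ δ := by
        rw [haj j] at htx htk
        rw [abs_le]
        constructor
        · linarith [htx.1, htk.2]
        · linarith [htx.2, htk.1]
      linarith
    have h2 : ∑ j ∈ J, volume (C j) ≤ volume (Metric.thickening (2*δ) K) := by
      rw [← measure_biUnion_finset hdisjJ (fun j hj => hCmeas j (hJn j hj))]
      exact measure_mono h1
    have h3 : ∑ j ∈ J, volume (C j) = (J.card : ENNReal) * ENNReal.ofReal δ := by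
      rw [Finset.sum_congr rfl (fun j hj => hCvol j (hJn j hj)), Finset.sum_const,
        nsmul_eq_mul]
    rw [h3] at h2
    have h4 : (J.card : ENNReal) * ENNReal.ofReal δ < ENNReal.ofReal ε₀ := lt_of_le_of_lt h2 hthickvol
    have h5 : ENNReal.ofReal ((J.card : ℝ) * δ) < ENNReal.ofReal ε₀ := by
      rwa [ENNReal.ofReal_mul (by positivity), ENNReal.ofReal_natCast]
    have := (ENNReal.ofReal_lt_ofReal_iff hε₀).mp h5
    exact this
  -- continuity of the boundary function
  have hzball : ∀ θ : ℝ, ((r:ℂ) * Complex.exp (θ * Complex.I)) ∈ Metric.ball (0:ℂ) 1 := by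
    intro θ
    rw [Metric.mem_ball, dist_zero_right, norm_mul,
      Complex.norm_exp_ofReal_mul_I, mul_one, Complex.norm_real, Real.norm_eq_abs,
      abs_of_pos hr0]
    exact hr1
  have hznorm : ∀ θ : ℝ, ‖(r:ℂ) * Complex.exp (θ * Complex.I)‖ = r := by
    intro θ
    rw [norm_mul, Complex.norm_exp_ofReal_mul_I, mul_one,
      Complex.norm_real, Real.norm_eq_abs, abs_of_pos hr0]
  have hFcont : Continuous fun θ : ℝ => F ((r:ℂ) * Complex.exp (θ * Complex.I)) := by
    apply hdiff.continuousOn.comp_continuous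
    · exact continuous_const.mul (Complex.continuous_exp.comp
        (Complex.continuous_ofReal.mul continuous_const))
    · exact hzball
  have hfc : Continuous fun θ : ℝ => ‖F ((r:ℂ) * Complex.exp (θ * Complex.I))‖^2 :=
    (hFcont.norm).pow 2
  -- split integral
  have hsplit : (∫ t in (0:ℝ)..(2*π), ‖F ((r:ℂ) * Complex.exp (t * Complex.I))‖^2)
      = ∑ j ∈ Finset.range n, ∫ θ in (a j)..(a (j+1)),
          ‖F ((r:ℂ) * Complex.exp (θ * Complex.I))‖^2 := by
    rw [intervalIntegral.sum_integral_adjacent_intervals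
      (fun k _ => hfc.intervalIntegrable _ _)]
    congr 1
    · rw [hadef]; simp
    · rw [hadef]; simp only; exact h2π.symm
  -- per-cell lower bound
  have hcell : ∀ j ∈ Finset.range n, (if j ∈ J then m j^2/(81*δ) else 0)
      ≤ ∫ θ in (a j)..(a (j+1)), ‖F ((r:ℂ) * Complex.exp (θ * Complex.I))‖^2 := by
    intro j hjr
    have hj := Finset.mem_range.mp hjr
    have hab : a j ≤ a (j+1) := by rw [haj j]; linarith
    by_cases hjJ : j ∈ J
    · simp only [if_pos hjJ]
      have hptwise : ∀ θ ∈ Set.Icc (a j) (a (j+1)),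
          (m j/(9*δ))^2 ≤ ‖F ((r:ℂ) * Complex.exp (θ * Complex.I))‖^2 := by
        intro θ hθ
        set z : ℂ := (r:ℂ) * Complex.exp (θ * Complex.I) with hz
        have hz1 : ‖z‖ < 1 := by rw [hz, hznorm]; exact hr1
        rw [hF z (hzball θ)]
        rw [Complex.norm_exp]
        have hre : (∫ t, (fourier 1 t + z) / (fourier 1 t - z) ∂μ).re
            = ∫ t, ((fourier 1 t + z) / (fourier 1 t - z)).re ∂μ :=
          (integral_re (integrable_g μ hz1)).symm
        rw [hre]
        set u : ℝ := ∫ t, ((fourier 1 t + z) / (fourier 1 t - z)).re ∂μ with hu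
        have hge : m j / (9*δ) ≤ u := by
          have h1 : ∀ t ∈ C j, 1/(9*δ) ≤ ((fourier 1 t + z) / (fourier 1 t - z)).re := by
            intro t ht
            rw [hCdef] at ht
            simp only at ht
            obtain ⟨t', ht', rfl⟩ := ht
            rw [haj j] at ht'
            have hθ' : θ ∈ Set.Icc (a j) (a j + δ) := by rwa [haj j] at hθ
            exact cell_bound hδ0 hδhalf hrdef hθ' ht'
          have h2 : 1/(9*δ) * m j ≤ ∫ t in C j, ((fourier 1 t + z) / (fourier 1 t - z)).re ∂μ :=
            by have := setIntegral_ge_of_const_le (hCmeas j hj) (measure_ne_top μ _) h1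
                 ((integrable_g μ hz1).re.integrableOn)
               rw [smul_eq_mul, mul_comm] at this; exact this
          have h3 : (∫ t in C j, ((fourier 1 t + z) / (fourier 1 t - z)).re ∂μ) ≤ u :=
            setIntegral_le_integral (integrable_g μ hz1).re
              (Filter.Eventually.of_forall (re_g_nonneg hz1))
          calc m j / (9*δ) = 1/(9*δ) * m j := by ring
          _ ≤ _ := h2
          _ ≤ u := h3
        have hu0 : 0 ≤ u := le_trans (by positivity) hge
        have hexp : u ≤ Real.exp u := by linarith [Real.add_one_le_exp u]
        calc (m j/(9*δ))^2 ≤ u^2 := pow_le_pow_left₀ (by positivity) hge 2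
        _ ≤ (Real.exp u)^2 := pow_le_pow_left₀ hu0 hexp 2
      calc m j^2/(81*δ) = (a (j+1) - a j) • ((m j/(9*δ))^2) := by
            rw [haj j]
            simp only [smul_eq_mul]
            field_simp
            ring
        _ = ∫ _ in (a j)..(a (j+1)), (m j/(9*δ))^2 := (intervalIntegral.integral_const _).symm
        _ ≤ _ := intervalIntegral.integral_mono_on hab (intervalIntegrable_const)
            (hfc.intervalIntegrable _ _) hptwise
    · simp only [if_neg hjJ]
      exact intervalIntegral.integral_nonneg hab (fun θ _ => by positivity)
  -- assemble
  have htotal : (∑ j ∈ J, m j^2) / (81*δ) ≤ M := by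
    have h1 : ∑ j ∈ Finset.range n, (if j ∈ J then m j^2/(81*δ) else 0)
        ≤ ∑ j ∈ Finset.range n, ∫ θ in (a j)..(a (j+1)),
            ‖F ((r:ℂ) * Complex.exp (θ * Complex.I))‖^2 :=
      Finset.sum_le_sum hcell
    have h2 : ∑ j ∈ Finset.range n, (if j ∈ J then m j^2/(81*δ) else 0)
        = (∑ j ∈ J, m j^2) / (81*δ) := by
      rw [← Finset.sum_filter, Finset.filter_mem_eq_inter,
        Finset.inter_eq_right.mpr (by rw [hJdef]; exact Finset.filter_subset _ _),
        Finset.sum_div]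
    rw [h2] at h1
    rw [hsplit] at hint
    linarith
  -- Cauchy–Schwarz and final contradiction
  set S2 : ℝ := ∑ j ∈ J, m j^2 with hS2def
  have hS2nonneg : 0 ≤ S2 := Finset.sum_nonneg (fun j _ => by positivity)
  have hCS : (∑ j ∈ J, m j)^2 ≤ (J.card : ℝ) * S2 := by
    exact_mod_cast sq_sum_le_card_mul_sum_sq (s := J) (f := m)
  have h4 : (c/2)^2 ≤ (∑ j ∈ J, m j)^2 := by
    apply pow_le_pow_left₀ (by linarith) hsumJ
  have hS2' : (c/2)^2 ≤ (J.card : ℝ) * S2 := le_trans h4 hCS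
  have hM0 : 0 ≤ M := le_trans (by positivity) htotal
  have hS2b : S2 ≤ M * (81*δ) := by
    have := (div_le_iff₀ (by positivity : (0:ℝ) < 81*δ)).mp htotal
    linarith
  have hMMp : M ≤ Mp := by
    rw [hMpdef]
    have := le_max_left M 0
    linarith
  have e1 : (J.card:ℝ) * S2 ≤ (J.card:ℝ) * (M * (81*δ)) :=
    mul_le_mul_of_nonneg_left hS2b (Nat.cast_nonneg _)
  have e2 : (J.card:ℝ) * (M*(81*δ)) = 81*M*((J.card:ℝ)*δ) := by ring
  have e3 : 81*M*((J.card:ℝ)*δ) ≤ 81*M*ε₀ :=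
    mul_le_mul_of_nonneg_left (le_of_lt hJcard) (by positivity)
  have e4 : 81*M*ε₀ ≤ 81*Mp*ε₀ := by nlinarith
  have e5 : 81*Mp*ε₀ = c^2/8 := by
    rw [hε₀def]
    field_simp
    ring
  nlinarith [hS2', e1, e2, e3, e4, e5, hc0]
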